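/- Let K be a perfect field and A, B ∈ M_n(K) such that the characteristic polynomial of A is irreducible over K. If A and B have a common invariant hyperplane (subspace of dimension n−1) over some extension field of K, then AB = BA. -/

import Mathlib

open Polynomial

section Aux

variable {L V : Type*} [Field L] [AddCommGroup V] [Module L V]

/-- If `ker φ ≤ ker ψ` and `φ v₀ = 1`, then `ψ` is a scalar multiple of `φ`. -/
lemma aux_ker_le_ker_scalar (φ ψ : V →ₗ[L] L) (v₀ : V) (hv₀ : φ v₀ = 1)
    (h : LinearMap.ker φ ≤ LinearMap.ker ψ) (x : V) : ψ x = ψ v₀ * φ x := by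
  have hx : x - φ x • v₀ ∈ LinearMap.ker φ := by
    simp [hv₀]
  have := h hx
  rw [LinearMap.mem_ker, map_sub, map_smul, sub_eq_zero] at this
  rw [this, smul_eq_mul, mul_comm]

/-- A subspace of dimension `n - 1` that is not everything is the kernel of a functional. -/
lemma aux_hyperplane_ker {n : ℕ} (H : Submodule L (Fin n → L))
    (hH : Module.finrank L H = n - 1) (hHne : H ≠ ⊤) :
    ∃ φ : (Fin n → L) →ₗ[L] L, LinearMap.ker φ = H := by
  have hQ : Module.finrank L ((Fin n → L) ⧸ H) = 1 := by
    have h1 := Submodule.finrank_quotient_add_finrank H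
    rw [hH, Module.finrank_pi, Fintype.card_fin] at h1
    have hn : n ≠ 0 := by
      rintro rfl
      exact hHne (Subsingleton.elim _ _)
    omega
  let b : Module.Basis (Fin 1) L ((Fin n → L) ⧸ H) := Module.finBasisOfFinrankEq L _ hQ
  refine ⟨(b.coord 0) ∘ₗ H.mkQ, ?_⟩
  have hinj : LinearMap.ker (b.coord 0) = ⊥ := by
    rw [LinearMap.ker_eq_bot]
    intro x y hxy
    refine b.repr.injective (Finsupp.ext fun i => ?_)
    have : i = 0 := Subsingleton.elim _ _
    subst this
    exact hxy
  rw [LinearMap.ker_comp, hinj, Submodule.comap_bot, Submodule.ker_mkQ]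

/-- A nonzero vector is cyclic for a matrix with irreducible characteristic polynomial. -/
lemma aux_cyclic {n : ℕ} {K : Type*} [Field K] (A : Matrix (Fin n) (Fin n) K)
    (hirr : Irreducible A.charpoly) (w : Fin n → K) (hw : w ≠ 0) :
    LinearIndependent K fun k : Fin n => (A ^ (k : ℕ)).mulVec w := by
  rw [Fintype.linearIndependent_iff]
  intro g hg
  by_contra hne
  push_neg at hne
  obtain ⟨i0, hi0⟩ := hne
  set p : K[X] := ∑ k : Fin n, Polynomial.monomial (k : ℕ) (g k) with hp
  have hcoeff : ∀ k : Fin n, p.coeff (k : ℕ) = g k := by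
    intro k
    rw [hp, Polynomial.finset_sum_coeff]
    rw [Finset.sum_eq_single k]
    · simp
    · intro b _ hb
      rw [Polynomial.coeff_monomial, if_neg (by simpa [Fin.val_injective.eq_iff] using hb)]
    · simp
  have hpne : p ≠ 0 := fun h => hi0 (by rw [← hcoeff i0, h, Polynomial.coeff_zero])
  have hdeg : p.degree < A.charpoly.degree := by
    rw [show A.charpoly.degree = (n : WithBot ℕ) by simpa using A.charpoly_degree_eq_dim]
    refine lt_of_le_of_lt (Polynomial.degree_sum_le _ _) ?_
    rw [Finset.sup_lt_iff (by exact_mod_cast WithBot.bot_lt_coe n)]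
    intro k _
    exact lt_of_le_of_lt (Polynomial.degree_monomial_le _ _) (by exact_mod_cast k.2)
  have hndvd : ¬ A.charpoly ∣ p := fun hdvd =>
    hpne (Polynomial.eq_zero_of_dvd_of_degree_lt hdvd hdeg)
  have hcop : IsCoprime A.charpoly p :=
    (hirr.isCoprime_or_dvd p).resolve_right hndvd
  obtain ⟨a, b, hab⟩ := hcop
  have hPw : (Polynomial.aeval A p).mulVec w = 0 := by
    have heval : Polynomial.aeval A p = ∑ k : Fin n, g k • A ^ (k : ℕ) := by
      rw [hp, map_sum]
      refine Finset.sum_congr rfl fun k _ => ?_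
      rw [Polynomial.aeval_monomial, Algebra.algebraMap_eq_smul_one, smul_mul_assoc, one_mul]
    rw [heval]
    have hsum : (∑ k : Fin n, g k • A ^ (k : ℕ)).mulVec w
        = ∑ k : Fin n, g k • (A ^ (k : ℕ)).mulVec w := by
      rw [← Matrix.toLin'_apply, map_sum, LinearMap.sum_apply]
      refine Finset.sum_congr rfl fun k _ => ?_
      rw [map_smul, LinearMap.smul_apply, Matrix.toLin'_apply]
    rw [hsum]; exact hg
  have hone := congrArg (Polynomial.aeval A) hab
  rw [map_add, map_mul, map_mul, map_one] at hone
  have hw0 : w = 0 := by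
    calc w = (1 : Matrix (Fin n) (Fin n) K).mulVec w := by simp
    _ = ((Polynomial.aeval A a * Polynomial.aeval A A.charpoly
          + Polynomial.aeval A b * Polynomial.aeval A p)).mulVec w := by rw [hone]
    _ = 0 := by
        rw [Matrix.add_mulVec, ← Matrix.mulVec_mulVec, ← Matrix.mulVec_mulVec,
          hPw, Matrix.aeval_self_charpoly]
        simp
  exact hw hw0

end Aux

/-- Let `K` be perfect and `A, B ∈ Mₙ(K)` with `χ_A` irreducible over `K`. If `A` and `B`
have a common invariant hyperplane (dimension `n - 1`) over an extension field `L` of `K`,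
then `AB = BA`. -/
theorem stmt_6 {n : ℕ} {K : Type*} [Field K] [PerfectField K]
    {L : Type*} [Field L] [Algebra K L]
    (A B : Matrix (Fin n) (Fin n) K)
    (hirr : Irreducible A.charpoly)
    (H : Submodule L (Fin n → L))
    (hH : Module.finrank L H = n - 1) (hHne : H ≠ ⊤)
    (hA : ∀ v ∈ H, (A.map (algebraMap K L)).mulVec v ∈ H)
    (hB : ∀ v ∈ H, (B.map (algebraMap K L)).mulVec v ∈ H) :
    A * B = B * A := by
  obtain ⟨φ, hker⟩ := aux_hyperplane_ker H hH hHne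
  have cyc : ∀ w : Fin n → K, w ≠ 0 →
      LinearIndependent K fun k : Fin n => (A ^ (k : ℕ)).mulVec w :=
    fun w hw => aux_cyclic A hirr w hw
  set f := algebraMap K L with hf
  -- φ is nonzero
  have hφne : φ ≠ 0 := by
    intro h0
    rw [h0, LinearMap.ker_zero] at hker
    exact hHne hker.symm
  obtain ⟨x, hx⟩ : ∃ x, φ x ≠ 0 := by
    by_contra hc
    push_neg at hc
    exact hφne (LinearMap.ext fun y => hc y)
  set v₀ := (φ x)⁻¹ • x with hv₀def
  have hv₀ : φ v₀ = 1 := by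
    rw [hv₀def, map_smul, smul_eq_mul, inv_mul_cancel₀ hx]
  -- the eigenvalue functionals
  set φA : (Fin n → L) →ₗ[L] L := φ ∘ₗ Matrix.toLin' (A.map f) with hφA
  set φB : (Fin n → L) →ₗ[L] L := φ ∘ₗ Matrix.toLin' (B.map f) with hφB
  have hkerA : LinearMap.ker φ ≤ LinearMap.ker φA := by
    rw [hker]
    intro v hv
    rw [LinearMap.mem_ker, hφA, LinearMap.comp_apply, Matrix.toLin'_apply,
      ← LinearMap.mem_ker, hker]
    exact hA v hv
  have hkerB : LinearMap.ker φ ≤ LinearMap.ker φB := by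
    rw [hker]
    intro v hv
    rw [LinearMap.mem_ker, hφB, LinearMap.comp_apply, Matrix.toLin'_apply,
      ← LinearMap.mem_ker, hker]
    exact hB v hv
  have hlam := aux_ker_le_ker_scalar φ φA v₀ hv₀ hkerA
  have hmu := aux_ker_le_ker_scalar φ φB v₀ hv₀ hkerB
  have hφAv : ∀ u, φ ((A.map f).mulVec u) = φA v₀ * φ u := by
    intro u
    rw [← hlam u, hφA, LinearMap.comp_apply, Matrix.toLin'_apply]
  have hφBv : ∀ u, φ ((B.map f).mulVec u) = φB v₀ * φ u := by
    intro u
    rw [← hmu u, hφB, LinearMap.comp_apply, Matrix.toLin'_apply]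
  set C : Matrix (Fin n) (Fin n) K := A * B - B * A with hC
  -- image of C over L lands in H
  have hCH : ∀ u : Fin n → L, (C.map f).mulVec u ∈ H := by
    intro u
    have hmap : C.map f = A.map f * B.map f - B.map f * A.map f := by
      rw [hC, Matrix.map_sub _ (map_sub f), Matrix.map_mul, Matrix.map_mul]
    rw [← hker, LinearMap.mem_ker, hmap, Matrix.sub_mulVec, map_sub,
      ← Matrix.mulVec_mulVec, ← Matrix.mulVec_mulVec]
    simp only [hφAv, hφBv]
    ring
  -- suppose C ≠ 0
  by_contra hAB
  have hCne : C ≠ 0 := sub_ne_zero.mpr hAB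
  obtain ⟨v, hv⟩ : ∃ v, C.mulVec v ≠ 0 := by
    by_contra hc
    push_neg at hc
    apply hCne
    have h0 : Matrix.toLin' C = 0 := LinearMap.ext fun u => by
      rw [Matrix.toLin'_apply, hc u]; rfl
    have h1 := congrArg Matrix.toLin'.symm h0
    rwa [LinearEquiv.symm_apply_apply, map_zero] at h1
  set w := C.mulVec v with hwdef
  set jL : (Fin n → K) →ₗ[K] (Fin n → L) :=
    LinearMap.compLeft (Algebra.linearMap K L) (Fin n) with hjL
  have hjLapp : ∀ (u : Fin n → K) (i : Fin n), jL u i = f (u i) := fun u i => rfl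
  have hcompat : ∀ (M : Matrix (Fin n) (Fin n) K) (u : Fin n → K),
      jL (M.mulVec u) = (M.map f).mulVec (jL u) := by
    intro M u
    funext i
    rw [hjLapp]
    exact (f : K →+* L).map_mulVec M u i
  have hmem : ∀ k : ℕ, jL ((A ^ k).mulVec w) ∈ H := by
    intro k
    induction k with
    | zero =>
        rw [pow_zero, Matrix.one_mulVec, hwdef, hcompat]
        exact hCH _
    | succ k ih =>
        rw [pow_succ', ← Matrix.mulVec_mulVec, hcompat]
        exact hA _ ih
  -- the orbit of w spans everything
  have hspan : Submodule.span K (Set.range fun k : Fin n => (A ^ (k : ℕ)).mulVec w) = ⊤ := by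
    apply LinearIndependent.span_eq_top_of_card_eq_finrank' (cyc w hv)
    simp [Module.finrank_pi]
  have hall : ∀ u : Fin n → K, jL u ∈ H.restrictScalars K := by
    intro u
    have hu : u ∈ Submodule.span K (Set.range fun k : Fin n => (A ^ (k : ℕ)).mulVec w) := by
      rw [hspan]; trivial
    have hle : Submodule.span K (Set.range fun k : Fin n => (A ^ (k : ℕ)).mulVec w)
        ≤ Submodule.comap jL (H.restrictScalars K) := by
      rw [Submodule.span_le]
      rintro _ ⟨k, rfl⟩
      exact hmem (k : ℕ)
    exact hle hu
  -- conclude H = ⊤, a contradiction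
  apply hHne
  rw [eq_top_iff]
  intro u _
  have hsingle : ∀ i : Fin n, Pi.single i (1 : L) ∈ H := by
    intro i
    have hs : jL (Pi.single i (1 : K)) = Pi.single i (1 : L) := by
      funext j
      rw [hjLapp]
      by_cases hji : j = i
      · subst hji; simp
      · simp [Pi.single_apply, hji]
    rw [← hs]
    exact hall _
  have hu : u = ∑ i : Fin n, u i • (Pi.single i 1 : Fin n → L) := by
    funext j
    simp [Pi.single_apply, Finset.sum_ite_eq]
  rw [hu]
  exact Submodule.sum_mem _ fun i _ => Submodule.smul_mem _ _ (hsingle i)
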